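/- Let A be symmetric negative definite with eigenvalues λ₁ < ... < λ_n < 0 and orthonormal eigenvectors u_i. Suppose X is a fixed point of TriOFM-(Obj2) whose first s-1 columns are ±u₁,...,±u_{s-1} and whose s-th column x_s satisfies x_sᵀu_s = 0 (x_s is zero or a unit eigenvector for an eigenvalue > λ_s). Then the Jacobian diagonal block J_{ss} = 2A - AX_sX_sᵀ - X_sX_sᵀA - Ax_sx_sᵀ - (x_sᵀx_s)A - (x_sᵀAx_s)I - x_sx_sᵀA satisfies u_sᵀJ_{ss}u_s = 2λ_s - (x_sᵀx_s)λ_s - x_sᵀAx_s < 0, so such a fixed point is unstable. -/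

import Mathlib

open Matrix Finset

/-- instability of the non-minimal fixed points of
TriOFM-(Obj2).  `A` symmetric negative definite with orthonormal
eigenvectors `u_j` and eigenvalues `λ₁ < … < 0`; the first `s-1` columns of
the fixed point are `±u_j` and the `s`-th column `x_s` is orthogonal to
`u_s` (zero or a unit eigenvector for an eigenvalue `> λ_s`).  Then the
Jacobian block satisfies `u_sᵀJ_ssu_s = 2λ_s - (x_sᵀx_s)λ_s - x_sᵀAx_s < 0`,
so `J_ss` has a negative eigenvalue and the fixed point is unstable. -/
theorem stmt18 {n p : ℕ} (A : Matrix (Fin n) (Fin n) ℝ)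
    (hsymm : A.IsSymm)
    (hnegdef : ∀ v : Fin n → ℝ, v ≠ 0 → v ⬝ᵥ A.mulVec v < 0)
    (u : Fin p → Fin n → ℝ) (ev : Fin p → ℝ)
    (heig : ∀ j, A.mulVec (u j) = ev j • u j)
    (horthonormal : ∀ j k, u j ⬝ᵥ u k = if j = k then (1 : ℝ) else 0)
    (hstrict : StrictMono ev) (hneg : ∀ j, ev j < 0)
    (s : Fin p) (x : Fin p → Fin n → ℝ) (d : Fin p → ℝ)
    (hd : ∀ j, d j = 1 ∨ d j = -1)
    (hprev : ∀ j < s, x j = d j • u j)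
    (hperp : x s ⬝ᵥ u s = 0)
    (hxs : x s = 0 ∨ ∃ μ : ℝ, ev s < μ ∧ μ < 0 ∧
      A.mulVec (x s) = μ • x s ∧ x s ⬝ᵥ x s = 1) :
    let B : Matrix (Fin n) (Fin n) ℝ :=
      ∑ j ∈ Finset.univ.filter (· ≤ s), vecMulVec (x j) (x j)
    let J : Matrix (Fin n) (Fin n) ℝ :=
      (2 : ℝ) • A - A * B - B * A - A * vecMulVec (x s) (x s)
        - (x s ⬝ᵥ x s) • A
        - (x s ⬝ᵥ A.mulVec (x s)) • (1 : Matrix (Fin n) (Fin n) ℝ)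
        - vecMulVec (x s) (x s) * A
    u s ⬝ᵥ J.mulVec (u s)
        = 2 * ev s - (x s ⬝ᵥ x s) * ev s - x s ⬝ᵥ A.mulVec (x s)
      ∧ 2 * ev s - (x s ⬝ᵥ x s) * ev s - x s ⬝ᵥ A.mulVec (x s) < 0
      ∧ ∃ (μ : ℝ) (v : Fin n → ℝ), v ≠ 0 ∧ μ < 0 ∧ J.mulVec v = μ • v := by
  intro B J
  have huu : u s ⬝ᵥ u s = 1 := by simpa using horthonormal s s
  have hvmv : ∀ (a b v : Fin n → ℝ),
      (vecMulVec a b).mulVec v = (b ⬝ᵥ v) • a := by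
    intro a b v
    ext i
    simp [Matrix.mulVec, Matrix.vecMulVec_apply, dotProduct, Finset.mul_sum,
      mul_comm, mul_assoc, mul_left_comm]
  have hxu : ∀ j ≤ s, x j ⬝ᵥ u s = 0 := by
    intro j hj
    rcases lt_or_eq_of_le hj with h | h
    · rw [hprev j h, smul_dotProduct, horthonormal]
      simp [Fin.ne_of_lt h, ne_of_lt h]
    · subst h; exact hperp
  have hsum : ∀ (t : Finset (Fin p)) (f : Fin p → Matrix (Fin n) (Fin n) ℝ)
      (v : Fin n → ℝ), (∑ j ∈ t, f j).mulVec v = ∑ j ∈ t, (f j).mulVec v := by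
    intro t f v
    induction t using Finset.induction_on with
    | empty => simp
    | insert _ _ h ih => simp [Finset.sum_insert h, Matrix.add_mulVec, ih]
  have hBu : B.mulVec (u s) = 0 := by
    show (∑ j ∈ Finset.univ.filter (· ≤ s), vecMulVec (x j) (x j)).mulVec (u s) = 0
    rw [hsum]
    apply Finset.sum_eq_zero
    intro j hj
    rw [hvmv, hxu j (by simpa using hj)]
    simp
  set c : ℝ := 2 * ev s - (x s ⬝ᵥ x s) * ev s - x s ⬝ᵥ A.mulVec (x s) with hc
  have hJu : J.mulVec (u s) = c • u s := by
    show ((2 : ℝ) • A - A * B - B * A - A * vecMulVec (x s) (x s)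
        - (x s ⬝ᵥ x s) • A
        - (x s ⬝ᵥ A.mulVec (x s)) • (1 : Matrix (Fin n) (Fin n) ℝ)
        - vecMulVec (x s) (x s) * A).mulVec (u s) = c • u s
    have h1 : (A * B).mulVec (u s) = 0 := by
      rw [← Matrix.mulVec_mulVec, hBu, Matrix.mulVec_zero]
    have h2 : (B * A).mulVec (u s) = 0 := by
      rw [← Matrix.mulVec_mulVec, heig s, Matrix.mulVec_smul, hBu, smul_zero]
    have h3 : (A * vecMulVec (x s) (x s)).mulVec (u s) = 0 := by
      rw [← Matrix.mulVec_mulVec, hvmv, hperp, zero_smul, Matrix.mulVec_zero]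
    have h4 : (vecMulVec (x s) (x s) * A).mulVec (u s) = 0 := by
      rw [← Matrix.mulVec_mulVec, heig s, hvmv, dotProduct_smul, hperp,
        smul_zero, zero_smul]
    rw [Matrix.sub_mulVec, Matrix.sub_mulVec, Matrix.sub_mulVec,
      Matrix.sub_mulVec, Matrix.sub_mulVec, Matrix.sub_mulVec,
      h1, h2, h3, h4, Matrix.smul_mulVec, Matrix.smul_mulVec,
      Matrix.smul_mulVec, Matrix.one_mulVec, heig s]
    ext i
    simp only [Pi.sub_apply, Pi.smul_apply, Pi.zero_apply, smul_eq_mul, hc]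
    ring
  have hcval : u s ⬝ᵥ J.mulVec (u s) = c := by
    rw [hJu, dotProduct_smul, huu]
    simp
  have hclt : c < 0 := by
    rcases hxs with h0 | ⟨μ, hμ1, hμ2, hμeig, hμnorm⟩
    · rw [hc, h0]
      simp only [zero_dotProduct, Matrix.mulVec_zero, dotProduct_zero,
        zero_mul, sub_zero]
      have := hneg s; linarith
    · rw [hc, hμnorm, hμeig, dotProduct_smul, hμnorm]
      simp only [smul_eq_mul, mul_one, one_mul]
      linarith
  have hune : u s ≠ 0 := by
    intro h
    rw [h] at huu
    simp at huu
  exact ⟨hcval, hclt, c, u s, hune, hclt, hJu⟩
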